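/- In the ordered Banach setting, iterates of comparable points converge to the same limit: if F is monotone with ρ(Fx, Fy, r) ≤ κρ(x, y, r) for comparable x, y (0 ≤ κ < 1), and Fⁿ(α) → β, then for any γ comparable with α (γ ⪯ α or γ ⪰ α), Fⁿ(γ) → β. -/

import Mathlib

/-- Iterates of points comparable with α converge to the same limit β. -/
theorem gpm_iterates_of_comparable_converge {X : Type*} [PartialOrder X]
    (ρ : X → X → ℝ → ℝ) (o : ℝ → ℝ → ℝ)
    (ho0 : ∀ a : ℝ, 0 ≤ a → o a 0 = a)
    (homono : ∀ a b c : ℝ, 0 ≤ a → a ≤ b → 0 ≤ c → o a c ≤ o b c)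
    (hocomm : ∀ a b : ℝ, o a b = o b a)
    (hoassoc : ∀ a b c : ℝ, o a (o b c) = o (o a b) c)
    (hocont : Continuous fun q : ℝ × ℝ => o q.1 q.2)
    (hρnonneg : ∀ x y r, 0 < r → 0 ≤ ρ x y r)
    (hρ1 : ∀ x y, (∀ r, 0 < r → ρ x y r = 0) ↔ x = y)
    (hρ2 : ∀ x y r, ρ x y r = ρ y x r)
    (hρ3 : ∀ x y z r₁ r₂, 0 < r₁ → 0 < r₂ → ρ x y (r₁ + r₂) ≤ o (ρ x z r₁) (ρ y z r₂))
    (F : X → X) (hmono : Monotone F ∨ Antitone F)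
    (κ : ℝ) (hκ0 : 0 ≤ κ) (hκ1 : κ < 1)
    (hF : ∀ x y : X, y ≤ x → ∀ r : ℝ, 0 < r → ρ (F x) (F y) r ≤ κ * ρ x y r)
    (α β : X)
    (hβ : ∀ r : ℝ, 0 < r →
      Filter.Tendsto (fun n => ρ (F^[n] α) β r) Filter.atTop (nhds 0))
    (γ : X) (hγ : γ ≤ α ∨ α ≤ γ) :
    ∀ r : ℝ, 0 < r →
      Filter.Tendsto (fun n => ρ (F^[n] γ) β r) Filter.atTop (nhds 0) := by
  -- comparability of iterates
  have hcomp : ∀ n, F^[n] γ ≤ F^[n] α ∨ F^[n] α ≤ F^[n] γ := by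
    intro n
    induction n with
    | zero => simpa using hγ
    | succ n ih =>
      rw [Function.iterate_succ_apply', Function.iterate_succ_apply']
      rcases hmono with hm | hm
      · rcases ih with h | h
        · exact Or.inl (hm h)
        · exact Or.inr (hm h)
      · rcases ih with h | h
        · exact Or.inr (hm h)
        · exact Or.inl (hm h)
  -- contraction estimate on iterates
  have hcontr : ∀ n, ∀ r, 0 < r → ρ (F^[n] γ) (F^[n] α) r ≤ κ ^ n * ρ γ α r := by
    intro n
    induction n with
    | zero => intro r hr; simp
    | succ n ih =>
      intro r hr
      rw [Function.iterate_succ_apply', Function.iterate_succ_apply']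
      have h1 : ρ (F (F^[n] γ)) (F (F^[n] α)) r ≤ κ * ρ (F^[n] γ) (F^[n] α) r := by
        rcases hcomp n with h | h
        · calc ρ (F (F^[n] γ)) (F (F^[n] α)) r
              = ρ (F (F^[n] α)) (F (F^[n] γ)) r := hρ2 _ _ _
            _ ≤ κ * ρ (F^[n] α) (F^[n] γ) r := hF _ _ h r hr
            _ = κ * ρ (F^[n] γ) (F^[n] α) r := by rw [hρ2]
        · exact hF _ _ h r hr
      calc ρ (F (F^[n] γ)) (F (F^[n] α)) r
          ≤ κ * ρ (F^[n] γ) (F^[n] α) r := h1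
        _ ≤ κ * (κ ^ n * ρ γ α r) := by
            exact mul_le_mul_of_nonneg_left (ih r hr) hκ0
        _ = κ ^ (n + 1) * ρ γ α r := by ring
  intro r hr
  have hr2 : 0 < r / 2 := by linarith
  -- aₙ := ρ(Fⁿγ, Fⁿα, r/2) → 0
  have htendA : Filter.Tendsto (fun n => ρ (F^[n] γ) (F^[n] α) (r / 2))
      Filter.atTop (nhds 0) := by
    have hgeo : Filter.Tendsto (fun n : ℕ => κ ^ n * ρ γ α (r / 2))
        Filter.atTop (nhds 0) := by
      have := tendsto_pow_atTop_nhds_zero_of_lt_one hκ0 hκ1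
      simpa using this.mul_const (ρ γ α (r / 2))
    refine squeeze_zero (fun n => hρnonneg _ _ _ hr2) (fun n => hcontr n (r / 2) hr2) hgeo
  have htendB : Filter.Tendsto (fun n => ρ β (F^[n] α) (r / 2))
      Filter.atTop (nhds 0) := by
    have := hβ (r / 2) hr2
    simpa [hρ2] using this
  -- combine via o
  have htendO : Filter.Tendsto
      (fun n => o (ρ (F^[n] γ) (F^[n] α) (r / 2)) (ρ β (F^[n] α) (r / 2)))
      Filter.atTop (nhds 0) := by
    have h := (hocont.tendsto (0, 0)).comp (htendA.prodMk_nhds htendB)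
    have h00 : o 0 0 = 0 := ho0 0 le_rfl
    simpa [Function.comp_def, h00] using h
  refine squeeze_zero (fun n => hρnonneg _ _ _ hr) (fun n => ?_) htendO
  have := hρ3 (F^[n] γ) β (F^[n] α) (r / 2) (r / 2) hr2 hr2
  calc ρ (F^[n] γ) β r = ρ (F^[n] γ) β (r / 2 + r / 2) := by ring_nf
    _ ≤ o (ρ (F^[n] γ) (F^[n] α) (r / 2)) (ρ β (F^[n] α) (r / 2)) := this
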